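/- arXiv:2407.13716 — 2 statements merged into one kernel-verified Lean document; each statement's English description precedes it below -/
import Mathlib

section
/- Let n, d ≥ 1, let κ be a finite index set, and let (v_J)_{J ∈ κ} and (w_{(i,j),J})_{i,j ∈ [n], J ∈ κ} be vectors in ℂ^d. Suppose that Σ_{i ∈ [n]} (⟨w_{(i,j),J}, w_{(i,j'),J'}⟩)_{(j,J),(j',J')} ⪯ Id_n ⊗ G in the Loewner order, where G = (⟨v_J, v_{J'}⟩)_{J,J' ∈ κ} is the Gram matrix of (v_J) and Id_n ⊗ G is the block-diagonal matrix indexed by (j,J),(j',J') ∈ [n]×κ with entries δ_{j,j'} ⟨v_J, v_{J'}⟩. Then there exists a contraction A ∈ M_{dn,dn}(ℂ), with d×d blocks A(i,j) for i,j ∈ [n], such that A(i,j) v_J = w_{(i,j),J} for all i, j ∈ [n] and J ∈ κ. -/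
open scoped ComplexOrder

noncomputable section

/-- The ℓ2→ℓ2 operator norm of a complex matrix. -/
def opNorm {m n : Type*} [Fintype m] [Fintype n] [DecidableEq n] (A : Matrix m n ℂ) : ℝ :=
  ‖LinearMap.toContinuousLinearMap (Matrix.toEuclideanLin A)‖

/-- The `I`-th block of a matrix regarded as a block matrix. -/
def blockOf {p q : Type*} (X : Matrix (p × q) (p × q) ℂ) (I : p × p) : Matrix q q ℂ :=
  X.submatrix (fun k => (I.1, k)) (fun l => (I.2, l))

/-- The amplification `T_m` of a `t`-linear form on `M_n(ℂ)`. -/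
def ampl {n t m : ℕ} (T : MultilinearMap ℂ (fun _ : Fin t => Matrix (Fin n) (Fin n) ℂ) ℂ)
    (X : Fin t → Matrix (Fin n × Fin m) (Fin n × Fin m) ℂ) : Matrix (Fin m) (Fin m) ℂ :=
  ∑ I : Fin t → Fin n × Fin n,
    T (fun s => Matrix.single (I s).1 (I s).2 1) •
      ((List.finRange t).map (fun s => blockOf (X s) (I s))).prod

/-- The completely bounded norm of a `t`-linear form on `M_n(ℂ)`. -/
def cbNorm {n t : ℕ} (T : MultilinearMap ℂ (fun _ : Fin t => Matrix (Fin n) (Fin n) ℂ) ℂ) : ℝ :=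
  sSup {r : ℝ | ∃ (m : ℕ) (X : Fin t → Matrix (Fin n × Fin m) (Fin n × Fin m) ℂ),
    1 ≤ m ∧ (∀ s, opNorm (X s) ≤ 1) ∧ r = opNorm (ampl T X)}

/-- The matrix `A_0 (X_1 ⊗ Id_d) A_1 ⋯ A_{t-1} (X_t ⊗ Id_d) A_t`. -/
def faChain {n d t : ℕ} (ht : 1 ≤ t)
    (A0 : Matrix (Fin d) (Fin n × Fin d) ℂ)
    (A : Fin (t - 1) → Matrix (Fin n × Fin d) (Fin n × Fin d) ℂ)
    (At : Matrix (Fin n × Fin d) (Fin d) ℂ)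
    (X : Fin t → Matrix (Fin n) (Fin n) ℂ) : Matrix (Fin d) (Fin d) ℂ :=
  A0 * ((List.finRange (t - 1)).map (fun s =>
      Matrix.kroneckerMap (· * ·) (X (Fin.castLE (Nat.sub_le t 1) s))
        (1 : Matrix (Fin d) (Fin d) ℂ) * A s)).prod *
    Matrix.kroneckerMap (· * ·) (X ⟨t - 1, by omega⟩) (1 : Matrix (Fin d) (Fin d) ℂ) * At

/-- The factorization norm of a `t`-linear form on `M_n(ℂ)`. -/
def faNorm {n t : ℕ} (ht : 1 ≤ t)
    (T : MultilinearMap ℂ (fun _ : Fin t => Matrix (Fin n) (Fin n) ℂ) ℂ) : ℝ :=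
  sInf {w : ℝ |
    ∃ (d : ℕ) (u v : EuclideanSpace ℂ (Fin d))
      (A0 : Matrix (Fin d) (Fin n × Fin d) ℂ)
      (A : Fin (t - 1) → Matrix (Fin n × Fin d) (Fin n × Fin d) ℂ)
      (At : Matrix (Fin n × Fin d) (Fin d) ℂ),
      ‖u‖ ^ 2 = w ∧ ‖v‖ ^ 2 = w ∧
      opNorm A0 ≤ 1 ∧ (∀ s, opNorm (A s) ≤ 1) ∧ opNorm At ≤ 1 ∧
      ∀ X : Fin t → Matrix (Fin n) (Fin n) ℂ,
        T X = (inner ℂ u (Matrix.toEuclideanLin (faChain ht A0 A At X) v) : ℂ)}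

open Matrix

/-- If the summed Gram matrix of the `w`'s is dominated by `Id_n ⊗ Gram(v)` in the Loewner
order, then there is a contraction `A ∈ M_{dn,dn}(ℂ)` whose blocks map the `v`'s to the
`w`'s. -/
theorem exists_contraction_of_gram_le (n d : ℕ) (hn : 1 ≤ n) (hd : 1 ≤ d)
    (κ : Type) [Fintype κ]
    (v : κ → EuclideanSpace ℂ (Fin d))
    (w : Fin n → Fin n → κ → EuclideanSpace ℂ (Fin d))
    (h : (Matrix.kroneckerMap (· * ·) (1 : Matrix (Fin n) (Fin n) ℂ)
            (Matrix.of fun J J' : κ => (inner ℂ (v J) (v J') : ℂ)) -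
          Matrix.of fun p q : Fin n × κ =>
            ∑ i : Fin n, (inner ℂ (w i p.1 p.2) (w i q.1 q.2) : ℂ)).PosSemidef) :
    ∃ A : Matrix (Fin n × Fin d) (Fin n × Fin d) ℂ, opNorm A ≤ 1 ∧
      ∀ (i j : Fin n) (J : κ),
        Matrix.toEuclideanLin (blockOf A (i, j)) (v J) = w i j J := by
  classical
  let V : (Fin n × κ) → EuclideanSpace ℂ (Fin n × Fin d) := fun p =>
    (WithLp.equiv 2 _).symm (fun q : Fin n × Fin d => if q.1 = p.1 then v p.2 q.2 else 0)
  let W : (Fin n × κ) → EuclideanSpace ℂ (Fin n × Fin d) := fun p =>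
    (WithLp.equiv 2 _).symm (fun q : Fin n × Fin d => w q.1 p.1 p.2 q.2)
  have hVV : ∀ p q : Fin n × κ,
      (inner ℂ (V p) (V q) : ℂ) = if p.1 = q.1 then (inner ℂ (v p.2) (v q.2) : ℂ) else 0 := by
    intro p q
    simp only [V, PiLp.inner_apply, RCLike.inner_apply, WithLp.equiv_symm_apply, PiLp.toLp_apply,
      Fintype.sum_prod_type, apply_ite (starRingEnd ℂ), map_zero, ite_mul, zero_mul,
      mul_ite, mul_zero, Finset.sum_ite_irrel, Finset.sum_const_zero, Finset.sum_ite_eq',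
      Finset.mem_univ, if_true]
  have hWW : ∀ p q : Fin n × κ,
      (inner ℂ (W p) (W q) : ℂ) = ∑ i : Fin n, (inner ℂ (w i p.1 p.2) (w i q.1 q.2) : ℂ) := by
    intro p q
    simp only [W, PiLp.inner_apply, RCLike.inner_apply, WithLp.equiv_symm_apply, PiLp.toLp_apply,
      Fintype.sum_prod_type]
  let L : ((Fin n × κ) → ℂ) →ₗ[ℂ] EuclideanSpace ℂ (Fin n × Fin d) :=
    Fintype.linearCombination ℂ V
  let K : ((Fin n × κ) → ℂ) →ₗ[ℂ] EuclideanSpace ℂ (Fin n × Fin d) :=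
    Fintype.linearCombination ℂ W
  have key : ∀ c : (Fin n × κ) → ℂ, ‖K c‖ ≤ ‖L c‖ := by
    intro c
    have h0 := (Matrix.posSemidef_iff_dotProduct_mulVec.mp h).2 c
    have hquad : star c ⬝ᵥ ((Matrix.kroneckerMap (· * ·) (1 : Matrix (Fin n) (Fin n) ℂ)
            (Matrix.of fun J J' : κ => (inner ℂ (v J) (v J') : ℂ)) -
          Matrix.of fun p q : Fin n × κ =>
            ∑ i : Fin n, (inner ℂ (w i p.1 p.2) (w i q.1 q.2) : ℂ)) *ᵥ c) =
        (inner ℂ (L c) (L c) : ℂ) - (inner ℂ (K c) (K c) : ℂ) := by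
      simp only [L, K, Fintype.linearCombination_apply, sum_inner, inner_sum, inner_smul_left,
        inner_smul_right, hVV, hWW, dotProduct, Matrix.mulVec, Matrix.sub_apply,
        Pi.star_apply, Matrix.kroneckerMap_apply, Matrix.one_apply, Matrix.of_apply]
      simp only [Finset.mul_sum]
      rw [Finset.sum_comm, ← Finset.sum_sub_distrib]
      refine Finset.sum_congr rfl fun q _ => ?_
      rw [← Finset.sum_sub_distrib]
      refine Finset.sum_congr rfl fun p _ => ?_
      rcases eq_or_ne p.1 q.1 with hpq | hpq
      · simp only [hpq, if_true, RCLike.star_def, one_mul, sub_mul, mul_sub,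
          Finset.sum_mul, Finset.mul_sum]
        congr 1
        · ring
        · exact Finset.sum_congr rfl fun _ _ => by ring
      · simp only [hpq, if_false, RCLike.star_def, zero_mul, mul_zero, zero_sub, neg_mul, mul_neg,
          Finset.sum_mul, Finset.mul_sum]
        congr 1
        exact Finset.sum_congr rfl fun _ _ => by ring
    rw [hquad] at h0
    rw [sub_nonneg, inner_self_eq_norm_sq_to_K, inner_self_eq_norm_sq_to_K] at h0
    have h1 : ‖K c‖ ^ 2 ≤ ‖L c‖ ^ 2 := by exact_mod_cast h0
    nlinarith [norm_nonneg (K c), norm_nonneg (L c)]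
  have hker : LinearMap.ker L ≤ LinearMap.ker K := by
    intro c hc
    rw [LinearMap.mem_ker] at hc ⊢
    have := key c
    rw [hc, norm_zero] at this
    exact norm_eq_zero.mp (le_antisymm this (norm_nonneg _))
  let S : Submodule ℂ (EuclideanSpace ℂ (Fin n × Fin d)) := LinearMap.range L
  let g : S →ₗ[ℂ] EuclideanSpace ℂ (Fin n × Fin d) :=
    (Submodule.liftQ (LinearMap.ker L) K hker) ∘ₗ
      (LinearMap.quotKerEquivRange L).symm.toLinearMap
  have hg : ∀ c : (Fin n × κ) → ℂ, g ⟨L c, LinearMap.mem_range_self L c⟩ = K c := by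
    intro c
    have h1 : (LinearMap.quotKerEquivRange L).symm ⟨L c, LinearMap.mem_range_self L c⟩ =
        Submodule.Quotient.mk c := by
      rw [LinearEquiv.symm_apply_eq]
      exact (Subtype.ext (LinearMap.quotKerEquivRange_apply_mk L c)).symm
    simp only [g, LinearMap.comp_apply, LinearEquiv.coe_toLinearMap, h1,
      Submodule.liftQ_apply]
  let f : EuclideanSpace ℂ (Fin n × Fin d) →ₗ[ℂ] EuclideanSpace ℂ (Fin n × Fin d) :=
    g ∘ₗ S.orthogonalProjectionOnto.toLinearMap
  have hfnorm : ∀ x, ‖f x‖ ≤ ‖x‖ := by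
    intro x
    obtain ⟨c, hc⟩ := (S.orthogonalProjectionOnto x).2
    have h1 : (⟨L c, LinearMap.mem_range_self L c⟩ : S) = S.orthogonalProjectionOnto x :=
      Subtype.ext hc
    have h2 : f x = K c := by
      simp only [f, LinearMap.comp_apply, ContinuousLinearMap.coe_coe, ← h1, hg]
    rw [h2]
    calc ‖K c‖ ≤ ‖L c‖ := key c
      _ = ‖(S.orthogonalProjectionOnto x : EuclideanSpace ℂ (Fin n × Fin d))‖ := by rw [hc]
      _ ≤ ‖x‖ := by
          calc ‖(S.orthogonalProjectionOnto x : EuclideanSpace ℂ (Fin n × Fin d))‖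
              ≤ ‖S.orthogonalProjectionOnto‖ * ‖x‖ := S.orthogonalProjectionOnto.le_opNorm x
            _ ≤ 1 * ‖x‖ := by
                exact mul_le_mul_of_nonneg_right (Submodule.orthogonalProjectionOnto_norm_le S) (norm_nonneg x)
            _ = ‖x‖ := one_mul _
  have hfV : ∀ p : Fin n × κ, f (V p) = W p := by
    intro p
    have hL : L (Pi.single p (1 : ℂ)) = V p := by
      simp only [L, Fintype.linearCombination_apply, Pi.single_apply, ite_smul, zero_smul,
        Finset.sum_ite_eq', Finset.mem_univ, if_true, one_smul]
    have hK : K (Pi.single p (1 : ℂ)) = W p := by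
      simp only [K, Fintype.linearCombination_apply, Pi.single_apply, ite_smul, zero_smul,
        Finset.sum_ite_eq', Finset.mem_univ, if_true, one_smul]
    have hmem : V p ∈ S := hL ▸ LinearMap.mem_range_self L _
    have : f (V p) = g ⟨V p, hmem⟩ := by
      simp only [f, LinearMap.comp_apply, ContinuousLinearMap.coe_coe]
      congr 1
      exact Submodule.orthogonalProjectionOnto_mem_subspace_eq_self (⟨V p, hmem⟩ : S)
    rw [this, ← hK]
    have : (⟨V p, hmem⟩ : S) = ⟨L (Pi.single p 1), LinearMap.mem_range_self L _⟩ :=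
      Subtype.ext hL.symm
    rw [this, hg]
  refine ⟨Matrix.toEuclideanLin.symm f, ?_, ?_⟩
  · have hA : Matrix.toEuclideanLin (Matrix.toEuclideanLin.symm f) = f :=
      Matrix.toEuclideanLin.apply_symm_apply f
    rw [opNorm, hA]
    refine ContinuousLinearMap.opNorm_le_bound _ zero_le_one fun x => ?_
    rw [one_mul]
    simpa using hfnorm x
  · intro i j J
    have hA : Matrix.toEuclideanLin (Matrix.toEuclideanLin.symm f) = f :=
      Matrix.toEuclideanLin.apply_symm_apply f
    set A := Matrix.toEuclideanLin.symm f with hAdef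
    have hmv : A *ᵥ (fun q : Fin n × Fin d => if q.1 = j then v J q.2 else 0) =
        (fun q : Fin n × Fin d => w q.1 j J q.2) := by
      have := hfV (j, J)
      rw [← hA] at this
      have h2 := congrArg (WithLp.equiv 2 ((Fin n × Fin d) → ℂ)) this
      change A *ᵥ WithLp.ofLp (V (j, J)) = WithLp.ofLp (W (j, J)) at h2
      simpa [V, W] using h2
    apply (WithLp.equiv 2 ((Fin d) → ℂ)).injective
    show blockOf A (i, j) *ᵥ WithLp.ofLp (v J) = WithLp.ofLp (w i j J)
    funext k
    have h3 := congrFun hmv (i, k)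
    simp only [Matrix.mulVec, dotProduct, Fintype.sum_prod_type, mul_ite, mul_zero,
      Finset.sum_ite_irrel, Finset.sum_const_zero, Finset.sum_ite_eq', Finset.mem_univ,
      if_true] at h3
    simpa [Matrix.mulVec, dotProduct, blockOf, Matrix.submatrix_apply] using h3


end
end

section
/- Let n, t, d ≥ 1, let v ∈ ℂ^d, and for each s ∈ [t] let (v_I)_{I ∈ ([n]×[n])^s} be a family of vectors in ℂ^d. Then the following are equivalent: (1) there exist contractions A_1, …, A_t ∈ M_{dn,dn}(ℂ) such that v_I = A_{t-s+1}(I_1) A_{t-s+2}(I_2) ⋯ A_t(I_s) v for every s ∈ [t] and every I = (I_1, …, I_s) ∈ ([n]×[n])^s, where A(i,j) ∈ M_d(ℂ) denotes the (i,j)-th d×d block of A; (2) Σ_{i ∈ [n]} (⟨v_{(i,j)}, v_{(i,j')}⟩)_{j,j' ∈ [n]} ⪯ ‖v‖² · Id_n, and for every s ∈ [t−1], Σ_{i ∈ [n]} (⟨v_{(i,j)⌢J}, v_{(i,j')⌢J'}⟩)_{(j,J),(j',J')} ⪯ Id_n ⊗ (⟨v_J, v_{J'}⟩)_{J,J' ∈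 ([n]×[n])^s}, where (i,j)⌢J denotes the concatenation of the index (i,j) with the multi-index J, and Id_n ⊗ G is the block-diagonal matrix with n copies of G. -/
open scoped ComplexOrder

noncomputable section

lemma opNorm_le_one_iff {m m' : Type*} [Fintype m] [Fintype m'] [DecidableEq m]
    (A : Matrix m' m ℂ) :
    opNorm A ≤ 1 ↔ ∀ x : EuclideanSpace ℂ m, ‖Matrix.toEuclideanLin A x‖ ≤ ‖x‖ := by
  unfold opNorm
  rw [ContinuousLinearMap.opNorm_le_iff zero_le_one]
  simp

lemma opNorm_zero_le_one {m m' : Type*} [Fintype m] [Fintype m'] [DecidableEq m] :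
    opNorm (0 : Matrix m' m ℂ) ≤ 1 := by
  rw [opNorm_le_one_iff]; intro x; simp

lemma quad_eq {P : Type*} [Fintype P] {m : Type*} [Fintype m]
    (w : P → EuclideanSpace ℂ m) (x : P → ℂ) :
    dotProduct (star x) ((Matrix.of fun p q => (inner ℂ (w p) (w q) : ℂ)).mulVec x)
      = (inner ℂ (∑ p, x p • w p) (∑ p, x p • w p) : ℂ) := by
  rw [inner_sum]
  simp only [inner_smul_right, sum_inner, inner_smul_left]
  simp only [dotProduct, Matrix.mulVec, Matrix.of_apply, Pi.star_apply, RCLike.star_def]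
  simp only [Finset.mul_sum]
  rw [Finset.sum_comm]
  exact Finset.sum_congr rfl fun q _ => Finset.sum_congr rfl fun p _ => by ring

lemma gram_herm {P : Type*} [Fintype P] {m : Type*} [Fintype m]
    (w : P → EuclideanSpace ℂ m) :
    (Matrix.of fun p q => (inner ℂ (w p) (w q) : ℂ)).IsHermitian := by
  refine Matrix.ext fun p q => ?_
  simp only [Matrix.conjTranspose_apply, Matrix.of_apply, RCLike.star_def]
  exact inner_conj_symm _ _

lemma gram_psd_iff {P : Type*} [Fintype P] {m m' : Type*} [Fintype m] [Fintype m']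
    (w : P → EuclideanSpace ℂ m) (u : P → EuclideanSpace ℂ m') :
    ((Matrix.of fun p q => (inner ℂ (w p) (w q) : ℂ)) -
      Matrix.of fun p q => (inner ℂ (u p) (u q) : ℂ)).PosSemidef
    ↔ ∀ x : P → ℂ, ‖∑ p, x p • u p‖ ≤ ‖∑ p, x p • w p‖ := by
  have hq : ∀ x : P → ℂ,
      dotProduct (star x)
        (((Matrix.of fun p q => (inner ℂ (w p) (w q) : ℂ)) -
          Matrix.of fun p q => (inner ℂ (u p) (u q) : ℂ)).mulVec x)
      = ((‖∑ p, x p • w p‖ ^ 2 - ‖∑ p, x p • u p‖ ^ 2 : ℝ) : ℂ) := by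
    intro x
    rw [Matrix.sub_mulVec, dotProduct_sub, quad_eq, quad_eq,
      inner_self_eq_norm_sq_to_K, inner_self_eq_norm_sq_to_K]
    push_cast
    norm_cast
  constructor
  · intro h x
    have h2 := h.dotProduct_mulVec_nonneg x
    rw [hq x, Complex.zero_le_real] at h2
    nlinarith [norm_nonneg (∑ p, x p • u p), norm_nonneg (∑ p, x p • w p)]
  · intro h
    refine Matrix.PosSemidef.of_dotProduct_mulVec_nonneg ((gram_herm w).sub (gram_herm u)) fun x => ?_
    rw [hq x, Complex.zero_le_real]
    nlinarith [h x, norm_nonneg (∑ p, x p • u p), norm_nonneg (∑ p, x p • w p)]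

lemma douglas {P : Type*} [Fintype P] [DecidableEq P] {m m' : Type*}
    [Fintype m] [Fintype m'] [DecidableEq m]
    (w : P → EuclideanSpace ℂ m) (u : P → EuclideanSpace ℂ m')
    (h : ∀ x : P → ℂ, ‖∑ p, x p • u p‖ ≤ ‖∑ p, x p • w p‖) :
    ∃ C : Matrix m' m ℂ, opNorm C ≤ 1 ∧ ∀ p, Matrix.toEuclideanLin C (w p) = u p := by
  set ψ : (P → ℂ) →ₗ[ℂ] EuclideanSpace ℂ m := Fintype.linearCombination ℂ w with hψdef
  set φ : (P → ℂ) →ₗ[ℂ] EuclideanSpace ℂ m' := Fintype.linearCombination ℂ u with hφdef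
  have hψ : ∀ x, ψ x = ∑ p, x p • w p := fun x => Fintype.linearCombination_apply ℂ w x
  have hφ : ∀ x, φ x = ∑ p, x p • u p := fun x => Fintype.linearCombination_apply ℂ u x
  have hle : ∀ x, ‖φ x‖ ≤ ‖ψ x‖ := fun x => by rw [hψ, hφ]; exact h x
  have hker : LinearMap.ker ψ ≤ LinearMap.ker φ := by
    intro x hx
    rw [LinearMap.mem_ker] at hx ⊢
    have := hle x
    rw [hx, norm_zero] at this
    exact norm_le_zero_iff.mp this
  set K := LinearMap.range ψ with hK
  set C0 : K →ₗ[ℂ] EuclideanSpace ℂ m' :=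
    ((LinearMap.ker ψ).liftQ φ hker).comp ψ.quotKerEquivRange.symm.toLinearMap with hC0def
  have hC0 : ∀ x : P → ℂ, C0 ⟨ψ x, LinearMap.mem_range_self ψ x⟩ = φ x := by
    intro x
    simp only [hC0def, LinearMap.comp_apply, LinearEquiv.coe_toLinearMap]
    rw [LinearMap.quotKerEquivRange_symm_apply_image]
    exact Submodule.liftQ_apply _ φ x
  have hC0le : ∀ y : K, ‖C0 y‖ ≤ ‖y‖ := by
    rintro ⟨y, hy⟩
    obtain ⟨x, rfl⟩ := hy
    rw [hC0 x]
    exact hle x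
  set Cl : EuclideanSpace ℂ m →ₗ[ℂ] EuclideanSpace ℂ m' :=
    C0.comp ((K.orthogonalProjectionOnto).toLinearMap) with hCldef
  have hClw : ∀ p, Cl (w p) = u p := by
    intro p
    have h1 : w p = ψ (Pi.single p 1) := by
      rw [hψ]
      simp [Pi.single_apply, ite_smul]
    have h2 : u p = φ (Pi.single p 1) := by
      rw [hφ]
      simp [Pi.single_apply, ite_smul]
    rw [h1, h2, hCldef]
    simp only [LinearMap.comp_apply, ContinuousLinearMap.coe_coe]
    rw [show K.orthogonalProjectionOnto (ψ (Pi.single p 1))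
        = ⟨ψ (Pi.single p 1), LinearMap.mem_range_self ψ _⟩ from
      Submodule.orthogonalProjectionOnto_mem_subspace_eq_self ⟨ψ (Pi.single p 1), LinearMap.mem_range_self ψ _⟩]
    exact hC0 _
  have hCle : ∀ y, ‖Cl y‖ ≤ ‖y‖ := by
    intro y
    refine (hC0le _).trans ?_
    calc ‖(K.orthogonalProjectionOnto y : EuclideanSpace ℂ m)‖ = ‖K.orthogonalProjectionOnto y‖ := by
          rw [Submodule.norm_coe]
      _ ≤ ‖K.orthogonalProjectionOnto‖ * ‖y‖ := (K.orthogonalProjectionOnto).le_opNorm y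
      _ ≤ 1 * ‖y‖ :=
          mul_le_mul_of_nonneg_right K.orthogonalProjectionOnto_norm_le (norm_nonneg y)
      _ = ‖y‖ := one_mul _
  refine ⟨Matrix.toEuclideanLin.symm Cl, ?_, ?_⟩
  · rw [opNorm_le_one_iff]
    intro x
    rw [LinearEquiv.apply_symm_apply]
    exact hCle x
  · intro p
    rw [LinearEquiv.apply_symm_apply]
    exact hClw p

def wv (n d : ℕ) (j : Fin n) (x : EuclideanSpace ℂ (Fin d)) :
    EuclideanSpace ℂ (Fin n × Fin d) :=
  WithLp.toLp 2 (fun p : Fin n × Fin d => if p.1 = j then x p.2 else 0)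

lemma inner_wv {n d : ℕ} (j j' : Fin n) (x y : EuclideanSpace ℂ (Fin d)) :
    (inner ℂ (wv n d j x) (wv n d j' y) : ℂ)
      = if j = j' then (inner ℂ x y : ℂ) else 0 := by
  simp only [PiLp.inner_apply, RCLike.inner_apply, wv]
  rw [Fintype.sum_prod_type]
  by_cases hjj : j = j'
  · subst hjj
    simp [Finset.sum_ite_eq', apply_ite (starRingEnd ℂ), ite_mul, mul_ite]
  · rw [if_neg hjj]
    refine Finset.sum_eq_zero fun i _ => Finset.sum_eq_zero fun k _ => ?_
    by_cases hij : i = j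
    · simp [hij, hjj]
    · simp [hij]

lemma toEuclideanLin_wv {n d : ℕ} (A' : Matrix (Fin n × Fin d) (Fin n × Fin d) ℂ)
    (j : Fin n) (x : EuclideanSpace ℂ (Fin d)) :
    Matrix.toEuclideanLin A' (wv n d j x)
      = WithLp.toLp 2 (fun p : Fin n × Fin d =>
          Matrix.toEuclideanLin (blockOf A' (p.1, j)) x p.2) := by
  ext p
  simp only [Matrix.toEuclideanLin_apply]
  show (A'.mulVec (wv n d j x).ofLp) p = ((blockOf A' (p.1, j)).mulVec x.ofLp) p.2
  simp only [Matrix.mulVec, dotProduct, blockOf, Matrix.submatrix_apply]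
  rw [Fintype.sum_prod_type]
  rw [Finset.sum_eq_single j]
  · cases p; simp [wv]
  · intro b _ hb
    refine Finset.sum_eq_zero fun l _ => ?_
    simp [wv, hb]
  · simp

lemma block_action {n d : ℕ} (A' : Matrix (Fin n × Fin d) (Fin n × Fin d) ℂ)
    (j : Fin n) (x : EuclideanSpace ℂ (Fin d)) (u : EuclideanSpace ℂ (Fin n × Fin d))
    (h : Matrix.toEuclideanLin A' (wv n d j x) = u) (i : Fin n) :
    Matrix.toEuclideanLin (blockOf A' (i, j)) x = WithLp.toLp 2 (fun k => u (i, k)) := by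
  ext k
  have := congrArg (fun z => z (i, k)) ((toEuclideanLin_wv A' j x).symm.trans h)
  exact this

lemma toEuclideanLin_mul {m : Type*} [Fintype m] [DecidableEq m]
    (M N : Matrix m m ℂ) (x : EuclideanSpace ℂ m) :
    Matrix.toEuclideanLin (M * N) x
      = Matrix.toEuclideanLin M (Matrix.toEuclideanLin N x) := by
  simp only [Matrix.toEuclideanLin_apply, Equiv.apply_symm_apply, Matrix.mulVec_mulVec]

lemma finRange_succ_prod {M : Type*} [Monoid M] (s : ℕ) (f : Fin (s + 1) → M) :
    ((List.finRange (s + 1)).map f).prod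
      = f 0 * ((List.finRange s).map (f ∘ Fin.succ)).prod := by
  rw [List.finRange_succ, List.map_cons, List.prod_cons, List.map_map]

lemma fin_congr {t : ℕ} {α : Sort*} (A : Fin t → α) {a b : ℕ} (ha : a < t) (hb : b < t)
    (h : a = b) : A ⟨a, ha⟩ = A ⟨b, hb⟩ := by subst h; rfl

lemma prod_formula_succ {n d t : ℕ} (A : Fin t → Matrix (Fin n × Fin d) (Fin n × Fin d) ℂ)
    (s : ℕ) (hst : s + 1 ≤ t) (I : Fin (s + 1) → Fin n × Fin n) :
    ((List.finRange (s + 1)).map (fun k : Fin (s + 1) =>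
        blockOf (A ⟨t - (s + 1) + k.val, by have := k.2; omega⟩) (I k))).prod
      = blockOf (A ⟨t - s - 1, by omega⟩) (I 0) *
        ((List.finRange s).map (fun k : Fin s =>
          blockOf (A ⟨t - s + k.val, by have := k.2; omega⟩) (Fin.tail I k))).prod := by
  rw [finRange_succ_prod]
  have h1 : ((fun k : Fin (s + 1) =>
        blockOf (A ⟨t - (s + 1) + k.val, by have := k.2; omega⟩) (I k)) ∘ Fin.succ)
      = fun k : Fin s =>
          blockOf (A ⟨t - s + k.val, by have := k.2; omega⟩) (Fin.tail I k) := by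
    funext k
    simp only [Function.comp_apply]
    rw [fin_congr A _ _ (show t - (s + 1) + ((Fin.succ k)).val = t - s + k.val by
      simp only [Fin.val_succ]; omega)]
    rfl
  rw [h1]
  congr 2

lemma gram1_eq {n d : ℕ} (v : EuclideanSpace ℂ (Fin d))
    (W : Fin n → Fin n → EuclideanSpace ℂ (Fin d)) :
    (((‖v‖ ^ 2 : ℂ) • (1 : Matrix (Fin n) (Fin n) ℂ)) -
        Matrix.of fun j j' : Fin n => ∑ i : Fin n, (inner ℂ (W i j) (W i j') : ℂ))
      = (Matrix.of fun j j' : Fin n => (inner ℂ (wv n d j v) (wv n d j' v) : ℂ)) -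
        Matrix.of fun j j' : Fin n =>
          (inner ℂ (WithLp.toLp 2 <| fun p : Fin n × Fin d => W p.1 j p.2)
            (WithLp.toLp 2 <| fun p : Fin n × Fin d => W p.1 j' p.2) : ℂ) := by
  refine Matrix.ext fun j j' => ?_
  simp only [Matrix.sub_apply, Matrix.smul_apply, Matrix.of_apply, Matrix.one_apply,
    inner_wv, smul_eq_mul, mul_ite, mul_one, mul_zero]
  congr 1
  · rw [inner_self_eq_norm_sq_to_K]
    norm_cast
  · simp only [PiLp.inner_apply, RCLike.inner_apply]
    rw [Fintype.sum_prod_type]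

lemma gram2_eq {n d s : ℕ} (Vs : (Fin s → Fin n × Fin n) → EuclideanSpace ℂ (Fin d))
    (U : Fin n → Fin n → (Fin s → Fin n × Fin n) → EuclideanSpace ℂ (Fin d)) :
    (Matrix.kroneckerMap (· * ·) (1 : Matrix (Fin n) (Fin n) ℂ)
        (Matrix.of fun J J' : Fin s → Fin n × Fin n => (inner ℂ (Vs J) (Vs J') : ℂ)) -
      Matrix.of fun p q : Fin n × (Fin s → Fin n × Fin n) =>
        ∑ i : Fin n, (inner ℂ (U i p.1 p.2) (U i q.1 q.2) : ℂ))
      = (Matrix.of fun p q : Fin n × (Fin s → Fin n × Fin n) =>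
          (inner ℂ (wv n d p.1 (Vs p.2)) (wv n d q.1 (Vs q.2)) : ℂ)) -
        Matrix.of fun p q : Fin n × (Fin s → Fin n × Fin n) =>
          (inner ℂ (WithLp.toLp 2 <| fun r : Fin n × Fin d => U r.1 p.1 p.2 r.2)
            (WithLp.toLp 2 <| fun r : Fin n × Fin d => U r.1 q.1 q.2 r.2) : ℂ) := by
  refine Matrix.ext fun p q => ?_
  simp only [Matrix.sub_apply, Matrix.of_apply, Matrix.kroneckerMap_apply, Matrix.one_apply,
    inner_wv, ite_mul, one_mul, zero_mul]
  congr 1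
  · simp only [PiLp.inner_apply, RCLike.inner_apply]
    rw [Fintype.sum_prod_type]

lemma prod_one {n d t : ℕ} (ht : 1 ≤ t) (A : Fin t → Matrix (Fin n × Fin d) (Fin n × Fin d) ℂ)
    (I : Fin 1 → Fin n × Fin n) :
    ((List.finRange 1).map (fun k : Fin 1 =>
        blockOf (A ⟨t - 1 + k.val, by have := k.2; omega⟩) (I k))).prod
      = blockOf (A ⟨t - 1, by omega⟩) (I 0) := by
  simp [List.finRange_succ]

/-- A family of vectors `(v_I)_{I ∈ ([n]×[n])^s}`, `s ∈ [t]`, arises from a chain of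
contractions `A_1, …, A_t` applied to `v` (i.e. `v_I = A_{t-s+1}(I_1)⋯A_t(I_s) v`) if and
only if the corresponding Gram-matrix Loewner inequalities hold. -/
theorem chain_iff_gram (n t d : ℕ) (hn : 1 ≤ n) (ht : 1 ≤ t) (hd : 1 ≤ d)
    (v : EuclideanSpace ℂ (Fin d))
    (V : (s : ℕ) → (Fin s → Fin n × Fin n) → EuclideanSpace ℂ (Fin d)) :
    (∃ A : Fin t → Matrix (Fin n × Fin d) (Fin n × Fin d) ℂ,
        (∀ s, opNorm (A s) ≤ 1) ∧
        ∀ (s : ℕ) (hs1 : 1 ≤ s) (hst : s ≤ t) (I : Fin s → Fin n × Fin n),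
          V s I = Matrix.toEuclideanLin
            (((List.finRange s).map (fun k =>
              blockOf (A ⟨t - s + k.val, by have := k.2; omega⟩) (I k))).prod) v) ↔
    ((((‖v‖ ^ 2 : ℂ) • (1 : Matrix (Fin n) (Fin n) ℂ)) -
        Matrix.of fun j j' : Fin n =>
          ∑ i : Fin n,
            (inner ℂ (V 1 (fun _ => (i, j))) (V 1 (fun _ => (i, j'))) : ℂ)).PosSemidef ∧
      ∀ s : ℕ, 1 ≤ s → s ≤ t - 1 →
        (Matrix.kroneckerMap (· * ·) (1 : Matrix (Fin n) (Fin n) ℂ)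
            (Matrix.of fun J J' : Fin s → Fin n × Fin n =>
              (inner ℂ (V s J) (V s J') : ℂ)) -
          Matrix.of fun p q : Fin n × (Fin s → Fin n × Fin n) =>
            ∑ i : Fin n, (inner ℂ (V (s + 1) (Fin.cons (i, p.1) p.2))
              (V (s + 1) (Fin.cons (i, q.1) q.2)) : ℂ)).PosSemidef) := by
  constructor
  · rintro ⟨A, hA, hf⟩
    have hbase : ∀ i j : Fin n, V 1 (fun _ => (i, j))
        = Matrix.toEuclideanLin (blockOf (A ⟨t - 1, by omega⟩) (i, j)) v := by
      intro i j
      rw [hf 1 le_rfl ht (fun _ => (i, j)), prod_one ht A (fun _ => (i, j))]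
    have hstep : ∀ s : ℕ, 1 ≤ s → s ≤ t - 1 → ∀ (i j : Fin n) (J : Fin s → Fin n × Fin n),
        V (s + 1) (Fin.cons (i, j) J)
          = Matrix.toEuclideanLin (blockOf (A ⟨t - s - 1, by omega⟩) (i, j)) (V s J) := by
      intro s hs1 hst i j J
      have hst' : s ≤ t := by omega
      have hst'' : s + 1 ≤ t := by omega
      rw [hf (s + 1) (by omega) hst'' (Fin.cons (i, j) J),
        prod_formula_succ A s hst'' (Fin.cons (i, j) J), toEuclideanLin_mul,
        Fin.tail_cons, Fin.cons_zero, ← hf s hs1 hst' J]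
    refine ⟨?_, ?_⟩
    · rw [gram1_eq v (fun i j => V 1 (fun _ => (i, j)))]
      refine (gram_psd_iff (fun j => wv n d j v)
        (fun j => WithLp.toLp 2 <|
          fun p : Fin n × Fin d => V 1 (fun _ => (p.1, j)) p.2)).mpr ?_
      intro x
      have hA' := hA ⟨t - 1, by omega⟩
      have hw : ∀ j : Fin n, Matrix.toEuclideanLin (A ⟨t - 1, by omega⟩) (wv n d j v)
          = (WithLp.toLp 2 <|
              fun p : Fin n × Fin d => V 1 (fun _ => (p.1, j)) p.2) := by
        intro j
        rw [toEuclideanLin_wv]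
        ext p
        exact (congrArg (fun z => z p.2) (hbase p.1 j)).symm
      calc ‖∑ j, x j • (WithLp.toLp 2 <|
              fun p : Fin n × Fin d => V 1 (fun _ => (p.1, j)) p.2)‖
          = ‖Matrix.toEuclideanLin (A ⟨t - 1, by omega⟩) (∑ j, x j • wv n d j v)‖ := by
            rw [map_sum]
            congr 1
            refine Finset.sum_congr rfl fun j _ => ?_
            rw [map_smul, hw j]
        _ ≤ ‖∑ j, x j • wv n d j v‖ := (opNorm_le_one_iff _).mp hA' _
    · intro s hs1 hst
      rw [gram2_eq (V s) (fun i j J => V (s + 1) (Fin.cons (i, j) J))]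
      refine (gram_psd_iff (fun q : Fin n × (Fin s → Fin n × Fin n) => wv n d q.1 (V s q.2))
        (fun q => WithLp.toLp 2 <|
          fun r : Fin n × Fin d => V (s + 1) (Fin.cons (r.1, q.1) q.2) r.2)).mpr ?_
      intro x
      have hA' := hA ⟨t - s - 1, by omega⟩
      have hw : ∀ q : Fin n × (Fin s → Fin n × Fin n),
          Matrix.toEuclideanLin (A ⟨t - s - 1, by omega⟩) (wv n d q.1 (V s q.2))
            = (WithLp.toLp 2 <|
                fun r : Fin n × Fin d => V (s + 1) (Fin.cons (r.1, q.1) q.2) r.2) := by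
        intro q
        rw [toEuclideanLin_wv]
        ext r
        exact (congrArg (fun z => z r.2) (hstep s hs1 hst r.1 q.1 q.2)).symm
      calc ‖∑ q, x q • (WithLp.toLp 2 <|
              fun r : Fin n × Fin d => V (s + 1) (Fin.cons (r.1, q.1) q.2) r.2)‖
          = ‖Matrix.toEuclideanLin (A ⟨t - s - 1, by omega⟩)
              (∑ q, x q • wv n d q.1 (V s q.2))‖ := by
            rw [map_sum]
            congr 1
            refine Finset.sum_congr rfl fun q _ => ?_
            rw [map_smul, hw q]
        _ ≤ _ := (opNorm_le_one_iff _).mp hA' _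
  · rintro ⟨h1, h2⟩
    have hx1 : ∀ x : Fin n → ℂ,
        ‖∑ j, x j • (WithLp.toLp 2 <|
            fun p : Fin n × Fin d => V 1 (fun _ => (p.1, j)) p.2)‖
          ≤ ‖∑ j, x j • wv n d j v‖ := by
      refine (gram_psd_iff (fun j => wv n d j v)
        (fun j => WithLp.toLp 2 <|
          fun p : Fin n × Fin d => V 1 (fun _ => (p.1, j)) p.2)).mp ?_
      rw [← gram1_eq v (fun i j => V 1 (fun _ => (i, j)))]
      exact h1
    obtain ⟨AL, hAL1, hAL2⟩ := douglas _ _ hx1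
    have hexC : ∀ s : ℕ, ∃ C : Matrix (Fin n × Fin d) (Fin n × Fin d) ℂ,
        opNorm C ≤ 1 ∧ (1 ≤ s → s ≤ t - 1 →
          ∀ q : Fin n × (Fin s → Fin n × Fin n),
            Matrix.toEuclideanLin C (wv n d q.1 (V s q.2))
              = WithLp.toLp 2 (
                  fun r : Fin n × Fin d => V (s + 1) (Fin.cons (r.1, q.1) q.2) r.2)) := by
      intro s
      by_cases hs : 1 ≤ s ∧ s ≤ t - 1
      · have hx : ∀ x : (Fin n × (Fin s → Fin n × Fin n)) → ℂ,
            ‖∑ q, x q • (WithLp.toLp 2 <|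
                fun r : Fin n × Fin d => V (s + 1) (Fin.cons (r.1, q.1) q.2) r.2)‖
              ≤ ‖∑ q, x q • wv n d q.1 (V s q.2)‖ := by
          refine (gram_psd_iff (fun q : Fin n × (Fin s → Fin n × Fin n) => wv n d q.1 (V s q.2))
            (fun q => WithLp.toLp 2 <|
              fun r : Fin n × Fin d => V (s + 1) (Fin.cons (r.1, q.1) q.2) r.2)).mp ?_
          rw [← gram2_eq (V s) (fun i j J => V (s + 1) (Fin.cons (i, j) J))]
          exact h2 s hs.1 hs.2
        obtain ⟨C, hC1, hC2⟩ := douglas _ _ hx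
        exact ⟨C, hC1, fun _ _ => hC2⟩
      · exact ⟨0, opNorm_zero_le_one, fun hs1 hs2 => absurd ⟨hs1, hs2⟩ hs⟩
    choose As hAs1 hAs2 using hexC
    set A : Fin t → Matrix (Fin n × Fin d) (Fin n × Fin d) ℂ :=
      fun k => if (k : ℕ) = t - 1 then AL else As (t - 1 - (k : ℕ)) with hAdef
    refine ⟨A, ?_, ?_⟩
    · intro k
      show opNorm (if (k : ℕ) = t - 1 then AL else As (t - 1 - (k : ℕ))) ≤ 1
      by_cases hk : (k : ℕ) = t - 1
      · rw [if_pos hk]; exact hAL1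
      · rw [if_neg hk]; exact hAs1 _
    · intro s hs1
      induction s, hs1 using Nat.le_induction with
      | base =>
        intro hst I
        rw [prod_one ht A I]
        have hAt : A ⟨t - 1, by omega⟩ = AL := by
          rw [hAdef]
          show (if t - 1 = t - 1 then AL else As (t - 1 - (t - 1))) = AL
          rw [if_pos rfl]
        rw [hAt]
        have hb := block_action AL (I 0).2 v _ (hAL2 (I 0).2) (I 0).1
        rw [show ((I 0).1, (I 0).2) = I 0 from rfl] at hb
        rw [hb]
        have hI : (fun _ : Fin 1 => ((I 0).1, (I 0).2)) = I :=
          funext fun x => by rw [Subsingleton.elim x 0]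
        ext k
        show V 1 I k = V 1 (fun _ : Fin 1 => ((I 0).1, (I 0).2)) k
        rw [hI]
      | succ s hs ih =>
        intro hst I
        rw [prod_formula_succ A s hst I, toEuclideanLin_mul, ← ih (by omega) (Fin.tail I)]
        have hAs : A ⟨t - s - 1, by omega⟩ = As s := by
          rw [hAdef]
          show (if t - s - 1 = t - 1 then AL else As (t - 1 - (t - s - 1))) = As s
          rw [if_neg (by omega), show t - 1 - (t - s - 1) = s from by omega]
        rw [hAs]
        have hb := block_action (As s) (I 0).2 (V s (Fin.tail I)) _
          (hAs2 s hs (by omega) ((I 0).2, Fin.tail I)) (I 0).1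
        rw [show ((I 0).1, (I 0).2) = I 0 from rfl] at hb
        rw [hb]
        ext k
        show V (s + 1) I k = V (s + 1) (Fin.cons (I 0) (Fin.tail I)) k
        rw [Fin.cons_self_tail]


end
end
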